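/- For any point z on the unit circle, the logarithmic potential of the equilibrium measure equals (V(z)-V_0)/2: that is, ∫₀^{2π} log|e^{iθ}-z| ψ(e^{iθ}) dθ = (V(z)-V_0)/2, where ψ is the equilibrium density and V_0 the zeroth Fourier coefficient of V. -/

import Mathlib

open MeasureTheory Real Set intervalIntegral

noncomputable def Feq (x : ℝ) : ℝ := Real.log (‖Complex.exp (x * Complex.I) - 1‖)

lemma Feq_periodic : Function.Periodic Feq (2*π) := by
  intro x
  unfold Feq
  rw [show ((x + 2*π : ℝ) : ℂ) * Complex.I = (x:ℂ)*Complex.I + 2*π*Complex.I by push_cast; ring,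
    Complex.exp_add, Complex.exp_two_pi_mul_I, mul_one]

lemma abs_exp_sub_exp (φ θ : ℝ) :
    ‖Complex.exp (φ*Complex.I) - Complex.exp (θ*Complex.I)‖
      = ‖Complex.exp (((φ-θ):ℝ)*Complex.I) - 1‖ := by
  have h : Complex.exp (φ*Complex.I) - Complex.exp (θ*Complex.I)
      = Complex.exp (θ*Complex.I) * (Complex.exp (((φ-θ):ℝ)*Complex.I) - 1) := by
    rw [mul_sub, ← Complex.exp_add, mul_one]
    congr 1
    push_cast
    ring
  rw [h, norm_mul, Complex.norm_exp_ofReal_mul_I, one_mul]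

lemma Feq_eq_sin (x : ℝ) : Feq x = Real.log (2 * |Real.sin (x/2)|) := by
  unfold Feq
  have h : Complex.exp ((x:ℂ) * Complex.I) - 1
      = Complex.exp (((x/2:ℝ):ℂ)*Complex.I) * (2 * (Real.sin (x/2) : ℂ) * Complex.I) := by
    have e1 : (x:ℂ)*Complex.I = ((x/2:ℝ):ℂ)*Complex.I + ((x/2:ℝ):ℂ)*Complex.I := by push_cast; ring
    have e2 : (1:ℂ) = Complex.exp (((x/2:ℝ):ℂ)*Complex.I) * Complex.exp (-(((x/2:ℝ):ℂ)*Complex.I)) := by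
      rw [← Complex.exp_add]; simp
    rw [e1, Complex.exp_add]
    conv_lhs => rw [e2]
    rw [← mul_sub]
    congr 1
    rw [Complex.exp_mul_I, show -(((x/2:ℝ):ℂ)*Complex.I) = (-(x/2:ℝ):ℂ)*Complex.I by push_cast; ring,
      Complex.exp_mul_I]
    push_cast
    simp [Complex.sin_neg, Complex.cos_neg, Complex.ofReal_sin]
    ring
  rw [h, norm_mul, Complex.norm_exp_ofReal_mul_I, one_mul]
  congr 1
  rw [norm_mul, norm_mul, Complex.norm_I, mul_one]
  rw [Complex.norm_real]; norm_num

lemma intervalIntegrable_log01 : IntervalIntegrable Real.log volume 0 1 := by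
  have h : IntervalIntegrable (fun x : ℝ => -Real.log x) volume 0 1 := by
    rw [intervalIntegrable_iff_integrableOn_Ioc_of_le zero_le_one]
    apply integrableOn_deriv_of_nonneg (g := fun x : ℝ => x - x * Real.log x)
    · exact (continuous_id.sub Real.continuous_mul_log).continuousOn
    · intro x hx
      have := ((hasDerivAt_id x).sub (Real.hasDerivAt_mul_log hx.1.ne'))
      exact this.congr_deriv (by ring)
    · intro x hx
      simp only [neg_nonneg]
      exact Real.log_nonpos hx.1.le hx.2.le
  have h2 := h.neg
  have e : (-(fun x : ℝ => -Real.log x)) = Real.log := by funext x; simp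
  rwa [e] at h2

lemma intervalIntegrable_log_le (c : ℝ) (hc : 0 < c) : IntervalIntegrable Real.log volume 0 c := by
  rcases le_total c 1 with h | h
  · exact intervalIntegrable_log01.mono_set (by rw [Set.uIcc_of_le hc.le, Set.uIcc_of_le zero_le_one]; exact Set.Icc_subset_Icc le_rfl h)
  · exact intervalIntegrable_log01.trans (intervalIntegrable_log (by
      rw [Set.uIcc_of_le h]; intro hmem; exact absurd hmem.1 (by norm_num)))

lemma intervalIntegrable_log_sin_half : IntervalIntegrable (fun x => Real.log (Real.sin x)) volume 0 (π/2) := by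
  have hπ := Real.pi_pos
  rw [intervalIntegrable_iff_integrableOn_Ioc_of_le (by linarith)]
  have hmeas : AEStronglyMeasurable (fun x => Real.log (Real.sin x))
      (volume.restrict (Ioc 0 (π/2))) :=
    (Real.measurable_log.comp Real.continuous_sin.measurable).aestronglyMeasurable
  have hD : IntegrableOn (fun x : ℝ => |Real.log x| + 1) (Ioc 0 (π/2)) volume := by
    have := ((intervalIntegrable_log_le (π/2) (by linarith)).norm.add
      (_root_.intervalIntegrable_const (c := (1:ℝ))))
    rwa [intervalIntegrable_iff_integrableOn_Ioc_of_le (by linarith)] at this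
  refine Integrable.mono hD hmeas ?_
  rw [ae_restrict_iff' measurableSet_Ioc]
  refine Filter.Eventually.of_forall fun x hx => ?_
  have hx0 : 0 < x := hx.1
  have hx2 : x ≤ π/2 := hx.2
  have hsinpos : 0 < Real.sin x := Real.sin_pos_of_pos_of_lt_pi hx0 (by linarith)
  have h1 : Real.sin x ≤ x := Real.sin_le hx0.le
  have h2 : 2/π * x ≤ Real.sin x := Real.mul_le_sin hx0.le hx2
  have hub : Real.log (Real.sin x) ≤ Real.log x := Real.log_le_log hsinpos h1
  have hlb : Real.log x - 1 ≤ Real.log (Real.sin x) := by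
    have := Real.log_le_log (by positivity : (0:ℝ) < 2/π * x) h2
    rw [Real.log_mul (by positivity) hx0.ne'] at this
    have hlog : -1 ≤ Real.log (2/π) := by
      rw [show (2:ℝ)/π = (π/2)⁻¹ by field_simp, Real.log_inv, neg_le_neg_iff]
      calc Real.log (π/2) ≤ π/2 - 1 := Real.log_le_sub_one_of_pos (by linarith)
        _ ≤ 1 := by have := Real.pi_le_four; linarith
    linarith
  rw [Real.norm_eq_abs, Real.norm_eq_abs,
    abs_of_nonneg (by positivity : (0:ℝ) ≤ |Real.log x| + 1), abs_le]
  have hl := neg_abs_le (Real.log x)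
  have hr := le_abs_self (Real.log x)
  constructor <;> [linarith; linarith]

lemma intervalIntegrable_log_sin' : IntervalIntegrable (fun x => Real.log (Real.sin x)) volume 0 π := by
  have base := intervalIntegrable_log_sin_half
  have h1 := (IntervalIntegrable.iff_comp_neg (by simp)).mp base
  have h2 := h1.comp_sub_right π
  have e : (fun x => Real.log (Real.sin (-(x - π)))) = fun x => Real.log (Real.sin x) := by
    funext x; rw [show -(x - π) = π - x by ring, Real.sin_pi_sub]
  rw [e, neg_zero, zero_add, show -(π/2) + π = π/2 by ring] at h2
  exact base.trans h2.symm

lemma Feq_intervalIntegrable_base : IntervalIntegrable Feq volume 0 (2*π) := by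
  have hπ := Real.pi_pos
  rw [intervalIntegrable_iff_integrableOn_Ioc_of_le (by linarith),
    integrableOn_Ioc_iff_integrableOn_Ioo]
  have hint : IntegrableOn (fun x => Real.log 2 + Real.log (Real.sin (x/2))) (Ioo 0 (2*π)) volume := by
    have h1 : IntervalIntegrable (fun x => Real.log (Real.sin (x/2))) volume 0 (2*π) := by
      have h0 := intervalIntegrable_log_sin'.comp_mul_right (c := 2⁻¹)
      have e : (fun x => Real.log (Real.sin (x * 2⁻¹))) = fun x => Real.log (Real.sin (x/2)) := by
        funext x; rw [show x * 2⁻¹ = x/2 by ring]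
      rw [e] at h0
      convert h0 using 1 <;> field_simp <;> ring
    have := (_root_.intervalIntegrable_const (μ := volume) (c := Real.log 2) (a := 0) (b := 2*π)).add h1
    rw [intervalIntegrable_iff_integrableOn_Ioc_of_le (by linarith)] at this
    exact this.mono_set Set.Ioo_subset_Ioc_self
  refine hint.congr_fun (fun x hx => ?_) measurableSet_Ioo
  have hs : 0 < Real.sin (x/2) := Real.sin_pos_of_pos_of_lt_pi (by linarith [hx.1]) (by linarith [hx.2])
  rw [Feq_eq_sin, abs_of_pos hs, Real.log_mul two_ne_zero hs.ne']

lemma Feq_intervalIntegrable (a b : ℝ) : IntervalIntegrable Feq volume a b := by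
  have hπ := Real.pi_pos
  have key : ∀ m : ℤ, IntervalIntegrable Feq volume (2*π*m) (2*π*m + 2*π) := by
    intro m
    have h := Feq_intervalIntegrable_base.comp_sub_right (2*π*m)
    have e : (fun x => Feq (x - 2*π*m)) = Feq := by
      funext x
      have h2 := (Feq_periodic.int_mul m) (x - 2*π*m)
      rw [show x - 2*π*(m:ℝ) + (m:ℝ)*(2*π) = x by ring] at h2
      exact h2.symm
    rw [e, zero_add, show 2*π + 2*π*(m:ℝ) = 2*π*(m:ℝ) + 2*π by ring] at h
    exact h
  have chain : ∀ n : ℕ, IntervalIntegrable Feq volume (-(2*π*n)) (2*π*n + 2*π) := by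
    intro n
    induction n with
    | zero => simpa using key 0
    | succ m ih =>
      have l : IntervalIntegrable Feq volume (-(2*π*((m:ℝ)+1))) (-(2*π*m)) := by
        have h := key (-(m:ℤ)-1)
        convert h using 1 <;> push_cast <;> ring
      have r : IntervalIntegrable Feq volume (2*π*m + 2*π) (2*π*((m:ℝ)+1) + 2*π) := by
        have h := key ((m:ℤ)+1)
        convert h using 1 <;> push_cast <;> ring
      have := (l.trans ih).trans r
      convert this using 1 <;> push_cast <;> ring
  obtain ⟨n, hn⟩ := exists_nat_ge ((max |a| |b|)/(2*π))
  have hb : max |a| |b| ≤ 2*π*n := by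
    rw [div_le_iff₀ (by linarith)] at hn; linarith
  have ha1 := (neg_abs_le a); have ha2 := le_abs_self a
  have hb1 := (neg_abs_le b); have hb2 := le_abs_self b
  have hm1 := le_max_left |a| |b|; have hm2 := le_max_right |a| |b|
  refine (chain n).mono_set (Set.uIcc_subset_uIcc ?_ ?_) <;>
    · rw [Set.mem_uIcc]; left; constructor <;> linarith

lemma Feq_window (t : ℝ) : ∫ x in t..(t + 2*π), Feq x = ∫ x in (0:ℝ)..(2*π), Feq x := by
  simpa using Feq_periodic.intervalIntegral_add_eq t 0

lemma Feq_integral_zero : ∫ x in (0:ℝ)..(2*π), Feq x = 0 := by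
  have hπ := Real.pi_pos
  set c := ∫ x in (0:ℝ)..(2*π), Feq x with hc
  -- Step A : ∫₀^{2π} Feq (2x) dx = c
  have stepA : ∫ x in (0:ℝ)..(2*π), Feq (2*x) = c := by
    have h := mul_integral_comp_mul_left (a := (0:ℝ)) (b := 2*π) (c := (2:ℝ)) (f := Feq)
    have h4 : ∫ x in (0:ℝ)..(2*(2*π)), Feq x = 2*c := by
      have := Feq_periodic.intervalIntegral_add_eq_add 0 (2*π) Feq_intervalIntegrable
      rw [show (2:ℝ)*(2*π) = 2*π + 2*π by ring, this, Feq_window 0]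
      rw [← hc]; ring
    rw [mul_zero, show (2:ℝ)*(2*π) = 2*(2*π) by ring, h4] at h
    linarith [h]
  -- Step B : a.e. on (0, 2π), Feq (2x) = Feq x + Feq (x + π)
  have stepB : ∫ x in (0:ℝ)..(2*π), Feq (2*x) = ∫ x in (0:ℝ)..(2*π), (Feq x + Feq (x + π)) := by
    rw [intervalIntegral.integral_of_le (by linarith), intervalIntegral.integral_of_le (by linarith)]
    apply MeasureTheory.integral_congr_ae
    have hA : volume ({π, 2*π} : Set ℝ) = 0 := (Set.toFinite _).measure_zero _
    have hae : ∀ᵐ x : ℝ, x ∉ ({π, 2*π} : Set ℝ) := by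
      rw [MeasureTheory.ae_iff]
      simp only [not_not, Set.setOf_mem_eq]
      exact hA
    filter_upwards [ae_restrict_of_ae hae, ae_restrict_mem measurableSet_Ioc] with x hxA hx
    have h1 : Complex.exp ((x:ℂ) * Complex.I) ≠ 1 := by
      intro h
      rw [Complex.exp_eq_one_iff] at h
      obtain ⟨n, hn⟩ := h
      have hI : ((x:ℂ)) * Complex.I = ((n:ℂ)*(2*π)) * Complex.I := by rw [hn]; ring
      have hxc := mul_right_cancel₀ Complex.I_ne_zero hI
      have hx' : x = n * (2*π) := by exact_mod_cast hxc
      have hn0 : 0 < (n:ℝ) := by nlinarith [hx.1]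
      have hn1 : (n:ℝ) ≤ 1 := by nlinarith [hx.2]
      have hne : (n:ℝ) = 1 := le_antisymm hn1 (by exact_mod_cast hn0)
      apply hxA
      simp only [Set.mem_insert_iff, Set.mem_singleton_iff]
      right
      rw [hx', hne]
      ring
    have h2 : Complex.exp ((x:ℂ) * Complex.I) ≠ -1 := by
      intro h
      have : Complex.exp (((x+π:ℝ):ℂ) * Complex.I) = 1 := by
        push_cast
        rw [add_mul, Complex.exp_add, h, Complex.exp_pi_mul_I]
        ring
      rw [Complex.exp_eq_one_iff] at this
      obtain ⟨n, hn⟩ := this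
      have hI : ((x+π:ℝ):ℂ) * Complex.I = ((n:ℂ)*(2*π)) * Complex.I := by rw [hn]; ring
      have hxc := mul_right_cancel₀ Complex.I_ne_zero hI
      have hx' : x + π = n * (2*π) := by exact_mod_cast hxc
      have hn0 : 0 < (n:ℝ) := by nlinarith [hx.1]
      have hn2 : ((n:ℝ)) < 2 := by nlinarith [hx.2]
      have hn2' : n < 2 := by exact_mod_cast hn2
      have hn0' : 0 < n := by exact_mod_cast hn0
      have hne : n = 1 := by omega
      apply hxA
      simp only [Set.mem_insert_iff, Set.mem_singleton_iff]
      left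
      rw [hne] at hx'
      push_cast at hx'
      linarith [hx']
    -- now the identity
    have hfac : Complex.exp (((2*x:ℝ):ℂ) * Complex.I) - 1
        = (Complex.exp ((x:ℂ) * Complex.I) - 1) * (Complex.exp ((x:ℂ) * Complex.I) + 1) := by
      rw [show (Complex.exp ((x:ℂ) * Complex.I) - 1) * (Complex.exp ((x:ℂ) * Complex.I) + 1)
          = Complex.exp ((x:ℂ) * Complex.I) * Complex.exp ((x:ℂ) * Complex.I) - 1 by ring,
        ← Complex.exp_add]
      congr 1
      push_cast
      ring
    have habs2 : ‖Complex.exp (((x+π:ℝ):ℂ) * Complex.I) - 1‖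
        = ‖Complex.exp ((x:ℂ) * Complex.I) + 1‖ := by
      have : Complex.exp (((x+π:ℝ):ℂ) * Complex.I) - 1 = -(Complex.exp ((x:ℂ) * Complex.I) + 1) := by
        push_cast
        rw [add_mul, Complex.exp_add, Complex.exp_pi_mul_I]
        ring
      rw [this, norm_neg]
    show Feq (2*x) = Feq x + Feq (x + π)
    unfold Feq
    rw [habs2]
    push_cast
    rw [show (2*(x:ℂ)) * Complex.I = ((2*x:ℝ):ℂ) * Complex.I by push_cast; ring, hfac, norm_mul,
      Real.log_mul]
    · exact norm_ne_zero_iff.mpr (sub_ne_zero.mpr h1)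
    · exact norm_ne_zero_iff.mpr (fun h => h2 (by linear_combination h))
  -- Step C : split the RHS
  have hshift : ∫ x in (0:ℝ)..(2*π), Feq (x + π) = c := by
    rw [intervalIntegral.integral_comp_add_right, zero_add, show 2*π + π = π + 2*π by ring,
      Feq_window π]
  have hsplit : ∫ x in (0:ℝ)..(2*π), (Feq x + Feq (x + π)) = c + c := by
    have hI2 : IntervalIntegrable (fun x => Feq (x + π)) volume 0 (2*π) := by
      have h := (Feq_intervalIntegrable π (3*π)).comp_add_right π
      convert h using 1 <;> ring
    rw [intervalIntegral.integral_add (Feq_intervalIntegrable 0 (2*π)) hI2, hshift, hc]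
  rw [stepB, hsplit] at stepA
  linarith

lemma Feq_shift_intervalIntegrable (θ : ℝ) :
    IntervalIntegrable (fun φ => Feq (φ - θ)) volume 0 (2*π) := by
  have h := (Feq_intervalIntegrable (-θ) (2*π - θ)).comp_sub_right θ
  convert h using 1 <;> ring

lemma Feq_shift_integral_zero (θ : ℝ) : ∫ φ in (0:ℝ)..(2*π), Feq (φ - θ) = 0 := by
  rw [intervalIntegral.integral_comp_sub_right Feq θ]
  have := Feq_periodic.intervalIntegral_add_eq (0-θ) 0
  rw [show 0-θ+2*π = 2*π - θ by ring, zero_add] at this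
  rw [this]
  exact Feq_integral_zero

lemma abs_Feq_window (θ : ℝ) :
    ∫ φ in (0:ℝ)..(2*π), |Feq (φ - θ)| = ∫ x in (0:ℝ)..(2*π), |Feq x| := by
  rw [intervalIntegral.integral_comp_sub_right (fun x => |Feq x|) θ]
  have hper : Function.Periodic (fun x => |Feq x|) (2*π) := fun x => by
    simp only [Feq_periodic x]
  have := hper.intervalIntegral_add_eq (0-θ) 0
  rw [show 0-θ+2*π = 2*π - θ by ring, zero_add] at this
  rw [this]

/-- The logarithmic potential of the equilibrium measure equals `(V(z) - V₀)/2` on the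
unit circle.  Here points of the circle are parametrized by their angle, `ψ` is the
equilibrium density (a probability density satisfying the Euler–Lagrange equality with
some constant `ℓ`), and `V₀ = (1/2π)∫ V` is the zeroth Fourier coefficient of `V`. -/
theorem log_potential_eq_half_V_sub_V0
    (V ψ : ℝ → ℝ) (hVc : Continuous V) (hψc : Continuous ψ) (hψpos : ∀ θ, 0 < ψ θ)
    (ℓ : ℝ)
    (hprob : (∫ θ in (0:ℝ)..(2*π), ψ θ) = 1)
    (hEL : ∀ φ : ℝ,
      2 * ∫ θ in (0:ℝ)..(2*π),
        Real.log (‖Complex.exp (φ * Complex.I) - Complex.exp (θ * Complex.I)‖) * ψ θ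
        = V φ - ℓ)
    (φ : ℝ) :
    (∫ θ in (0:ℝ)..(2*π),
      Real.log (‖Complex.exp (θ * Complex.I) - Complex.exp (φ * Complex.I)‖) * ψ θ)
      = (V φ - (1/(2*π)) * ∫ θ in (0:ℝ)..(2*π), V θ) / 2 := by
  have hπ := Real.pi_pos
  have h2π : (0:ℝ) ≤ 2*π := by linarith
  set μ := volume.restrict (Ioc (0:ℝ) (2*π)) with hμ
  -- pointwise identity between the two kinds of integrands
  have hFeq_eq : ∀ φ' θ : ℝ,
      Real.log (‖Complex.exp (φ' * Complex.I) - Complex.exp (θ * Complex.I)‖)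
        = Feq (φ' - θ) := by
    intro φ' θ
    rw [abs_exp_sub_exp φ' θ]
    rfl
  -- the EL identity rephrased with Feq
  have hEL' : ∀ φ' : ℝ, ∫ θ in (0:ℝ)..(2*π), Feq (φ' - θ) * ψ θ = (V φ' - ℓ)/2 := by
    intro φ'
    have h := hEL φ'
    have : ∫ θ in (0:ℝ)..(2*π), Feq (φ' - θ) * ψ θ
        = ∫ θ in (0:ℝ)..(2*π),
          Real.log (‖Complex.exp (φ' * Complex.I) - Complex.exp (θ * Complex.I)‖) * ψ θ := by
      apply intervalIntegral.integral_congr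
      intro θ _
      dsimp only
      rw [hFeq_eq φ' θ]
    rw [this]
    linarith
  -- measurability
  have hcontF : Continuous fun x : ℝ => ‖Complex.exp (x*Complex.I) - 1‖ := by
    continuity
  have hFm : Measurable Feq := Real.measurable_log.comp hcontF.measurable
  -- Fubini for K (θ, φ) := Feq (φ - θ) * ψ θ
  set f : ℝ → ℝ → ℝ := fun θ φ' => Feq (φ' - θ) * ψ θ with hf
  have hKm : AEStronglyMeasurable (Function.uncurry f) (μ.prod μ) :=
    ((hFm.comp (measurable_snd.sub measurable_fst)).mul
      (hψc.measurable.comp measurable_fst)).aestronglyMeasurable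
  have hslice : ∀ θ : ℝ, Integrable (fun φ' => f θ φ') μ := by
    intro θ
    have h := (Feq_shift_intervalIntegrable θ).mul_const (ψ θ)
    rwa [intervalIntegrable_iff_integrableOn_Ioc_of_le h2π] at h
  set C : ℝ := ∫ x in (0:ℝ)..(2*π), |Feq x| with hC
  have hnorm : ∀ θ : ℝ, (∫ φ', ‖f θ φ'‖ ∂μ) = C * ψ θ := by
    intro θ
    have h1 : (fun φ' => ‖f θ φ'‖) = fun φ' => |Feq (φ' - θ)| * ψ θ := by
      funext φ'
      rw [hf]
      simp only [Real.norm_eq_abs, abs_mul, abs_of_pos (hψpos θ)]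
    rw [h1]
    rw [hμ, ← intervalIntegral.integral_of_le h2π, intervalIntegral.integral_mul_const,
      abs_Feq_window θ, ← hC, mul_comm]
  have hnormint : Integrable (fun θ => ∫ φ', ‖f θ φ'‖ ∂μ) μ := by
    have : Integrable (fun θ => C * ψ θ) μ := by
      apply Continuous.integrableOn_Ioc
      exact continuous_const.mul hψc
    exact this.congr (Filter.Eventually.of_forall fun θ => (hnorm θ).symm)
  have hK : Integrable (Function.uncurry f) (μ.prod μ) := by
    rw [MeasureTheory.integrable_prod_iff hKm]
    exact ⟨Filter.Eventually.of_forall hslice, hnormint⟩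
  have hswap := MeasureTheory.integral_integral_swap (f := f) hK
  -- left side of swap is 0
  have hleft : (∫ θ, ∫ φ', f θ φ' ∂μ ∂μ) = 0 := by
    have hz : ∀ θ : ℝ, (∫ φ', f θ φ' ∂μ) = 0 := by
      intro θ
      have : (∫ φ', f θ φ' ∂μ) = (∫ φ' in (0:ℝ)..(2*π), Feq (φ' - θ)) * ψ θ := by
        rw [hμ, ← intervalIntegral.integral_of_le h2π, ← intervalIntegral.integral_mul_const]
      rw [this, Feq_shift_integral_zero θ, zero_mul]
    simp only [hz, MeasureTheory.integral_zero]
  -- right side of swap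
  have hright : (∫ φ', ∫ θ, f θ φ' ∂μ ∂μ)
      = ((∫ θ in (0:ℝ)..(2*π), V θ) - 2*π*ℓ)/2 := by
    have hinner : ∀ φ' : ℝ, (∫ θ, f θ φ' ∂μ) = (V φ' - ℓ)/2 := by
      intro φ'
      rw [hμ, ← intervalIntegral.integral_of_le h2π]
      exact hEL' φ'
    have : (∫ φ', ∫ θ, f θ φ' ∂μ ∂μ) = ∫ φ' in (0:ℝ)..(2*π), (V φ' - ℓ)/2 := by
      rw [hμ, ← intervalIntegral.integral_of_le h2π]
      apply intervalIntegral.integral_congr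
      intro x _
      dsimp only
      exact hinner x
    rw [this]
    rw [intervalIntegral.integral_div, intervalIntegral.integral_sub (hVc.intervalIntegrable 0 (2*π))
      (_root_.intervalIntegrable_const), intervalIntegral.integral_const]
    simp only [smul_eq_mul, sub_zero]
  have hVint : (∫ θ in (0:ℝ)..(2*π), V θ) = 2*π*ℓ := by
    rw [hswap] at hleft
    rw [hright] at hleft
    linarith
  -- final computation
  have hgoal : (∫ θ in (0:ℝ)..(2*π),
      Real.log (‖Complex.exp (θ * Complex.I) - Complex.exp (φ * Complex.I)‖) * ψ θ)
      = (V φ - ℓ)/2 := by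
    have : (∫ θ in (0:ℝ)..(2*π),
        Real.log (‖Complex.exp (θ * Complex.I) - Complex.exp (φ * Complex.I)‖) * ψ θ)
        = ∫ θ in (0:ℝ)..(2*π),
          Real.log (‖Complex.exp (φ * Complex.I) - Complex.exp (θ * Complex.I)‖) * ψ θ := by
      apply intervalIntegral.integral_congr
      intro θ _
      dsimp only
      rw [show Complex.exp (θ * Complex.I) - Complex.exp (φ * Complex.I)
          = -(Complex.exp (φ * Complex.I) - Complex.exp (θ * Complex.I)) by ring, norm_neg]
    rw [this]
    linarith [hEL φ]
  rw [hgoal, hVint]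
  have : (1/(2*π)) * (2*π*ℓ) = ℓ := by
    field_simp
  rw [this]
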